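/- Let (t_i)_{i∈ℕ} be a sequence of real numbers that is algebraically independent over ℚ, and let A ⊆ ℝ² be the set of all points P_{a,b} = (t_a + t_b, t_a² + t_a t_b + t_b²) over unordered pairs {a,b} of distinct naturals. Then for every m ≥ 1 and every partition (or covering) of A into m sets A₁, …, A_m, some A_i contains three distinct collinear points. -/

import Mathlib

/-- The point `P(a,b) = (a + b, a² + ab + b²)` in the plane. -/
noncomputable def Ppt (a b : ℝ) : ℝ × ℝ := (a + b, a ^ 2 + a * b + b ^ 2)

lemma Ppt_comm (a b : ℝ) : Ppt a b = Ppt b a := by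
  unfold Ppt
  rw [Prod.ext_iff]
  constructor <;> ring

/-- Infinite Ramsey-type lemma for monochromatic triangles, by induction on the
set of colors actually used. -/
lemma mono_triangle {m : ℕ} (c : ℕ → ℕ → Fin m) (hsymm : ∀ a b, c a b = c b a)
    (F : Finset (Fin m)) :
    ∀ S : Set ℕ, S.Infinite → (∀ a ∈ S, ∀ b ∈ S, a ≠ b → c a b ∈ F) →
    ∃ a ∈ S, ∃ b ∈ S, ∃ d ∈ S, a ≠ b ∧ a ≠ d ∧ b ≠ d ∧ c a b = c a d ∧ c a b = c b d := by
  classical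
  induction F using Finset.strongInduction with
  | _ F ih =>
    intro S hS hF
    obtain ⟨v, hv⟩ := hS.nonempty
    have hS' : (S \ {v}).Infinite := hS.diff (Set.finite_singleton v)
    -- one color class to v is infinite
    have hcover : (S \ {v}) ⊆ ⋃ j ∈ F, {x ∈ S \ {v} | c v x = j} := by
      intro x hx
      simp only [Set.mem_iUnion]
      exact ⟨c v x, hF v hv x hx.1 (by simpa using fun h => hx.2 h.symm), hx, rfl⟩
    have : ∃ j ∈ F, ({x ∈ S \ {v} | c v x = j}).Infinite := by
      by_contra h
      push_neg at h
      have : (⋃ j ∈ F, {x ∈ S \ {v} | c v x = j}).Finite :=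
        Set.Finite.biUnion F.finite_toSet fun j hj => by
          simpa using h j hj
      exact hS' (this.subset hcover)
    obtain ⟨j, hjF, hT⟩ := this
    set T := {x ∈ S \ {v} | c v x = j} with hTdef
    by_cases hcase : ∃ a ∈ T, ∃ b ∈ T, a ≠ b ∧ c a b = j
    · obtain ⟨a, ha, b, hb, hab, hcab⟩ := hcase
      refine ⟨v, hv, a, ha.1.1, b, hb.1.1, ?_, ?_, hab, ?_, ?_⟩
      · exact fun h => ha.1.2 h.symm
      · exact fun h => hb.1.2 h.symm
      · rw [ha.2, hb.2]
      · rw [ha.2, hcab]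
    · push_neg at hcase
      have hT' : ∀ a ∈ T, ∀ b ∈ T, a ≠ b → c a b ∈ F.erase j := by
        intro a ha b hb hab
        exact Finset.mem_erase.2 ⟨hcase a ha b hb hab, hF a ha.1.1 b hb.1.1 hab⟩
      obtain ⟨a, ha, b, hb, d, hd, h1, h2, h3, h4, h5⟩ :=
        ih (F.erase j) (Finset.erase_ssubset hjF) T hT hT'
      exact ⟨a, ha.1.1, b, hb.1.1, d, hd.1.1, h1, h2, h3, h4, h5⟩

theorem stmt_10 (t : ℕ → ℝ) (ht : AlgebraicIndependent ℚ t)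
    (A : Set (ℝ × ℝ))
    (hA : A = {p : ℝ × ℝ | ∃ a b : ℕ, a ≠ b ∧ p = Ppt (t a) (t b)})
    (m : ℕ) (hm : 1 ≤ m) (f : Fin m → Set (ℝ × ℝ))
    (hsub : ∀ i, f i ⊆ A) (hcov : A ⊆ ⋃ i, f i) :
    ∃ i : Fin m, ∃ p ∈ f i, ∃ q ∈ f i, ∃ r ∈ f i,
      p ≠ q ∧ p ≠ r ∧ q ≠ r ∧ Collinear ℝ ({p, q, r} : Set (ℝ × ℝ)) := by
  classical
  have htinj : Function.Injective t := ht.injective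
  -- coloring of points
  let g : ℝ × ℝ → Fin m := fun p =>
    if h : ∃ i, p ∈ f i then h.choose else ⟨0, hm⟩
  have hg : ∀ p ∈ A, p ∈ f (g p) := by
    intro p hp
    have h : ∃ i, p ∈ f i := Set.mem_iUnion.1 (hcov hp)
    simp only [g, dif_pos h]
    exact h.choose_spec
  let c : ℕ → ℕ → Fin m := fun a b => g (Ppt (t a) (t b))
  have hsymm : ∀ a b, c a b = c b a := by
    intro a b
    simp only [c, Ppt_comm (t a) (t b)]
  have hmemA : ∀ a b : ℕ, a ≠ b → Ppt (t a) (t b) ∈ A := by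
    intro a b hab
    rw [hA]; exact ⟨a, b, hab, rfl⟩
  obtain ⟨a, -, b, -, d, -, hab, had, hbd, e1, e2⟩ :=
    mono_triangle c hsymm Finset.univ Set.univ Set.infinite_univ
      (fun _ _ _ _ _ => Finset.mem_univ _)
  refine ⟨c a b, Ppt (t a) (t b), hg _ (hmemA a b hab),
    Ppt (t a) (t d), by rw [e1]; exact hg _ (hmemA a d had),
    Ppt (t b) (t d), by rw [e2]; exact hg _ (hmemA b d hbd), ?_, ?_, ?_, ?_⟩
  · intro h
    exact hbd (htinj (by have := congrArg Prod.fst h; simp [Ppt] at this; linarith))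
  · intro h
    exact had (htinj (by have := congrArg Prod.fst h; simp [Ppt] at this; linarith))
  · intro h
    exact hab (htinj (by have := congrArg Prod.fst h; simp [Ppt] at this; linarith))
  · rw [collinear_iff_of_mem (Set.mem_insert _ _)]
    refine ⟨(1, t a + t b + t d), ?_⟩
    intro p hp
    rcases hp with rfl | rfl | rfl
    · exact ⟨0, by simp⟩
    · refine ⟨t d - t b, ?_⟩
      simp only [Ppt, Prod.smul_mk, smul_eq_mul, vadd_eq_add, Prod.mk_add_mk,
        Prod.mk.injEq]
      constructor <;> ring
    · refine ⟨t d - t a, ?_⟩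
      simp only [Ppt, Prod.smul_mk, smul_eq_mul, vadd_eq_add, Prod.mk_add_mk,
        Prod.mk.injEq]
      constructor <;> ring
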